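/- For a 3-signotope χ on [n] with block partition [n] = C₁ ∪ C₂ (|C₁| = b, |C₂| = r), and for any fixed c₁ ∈ C₁, the map sending c₂ ∈ C₂ to the second coordinate of rf_χ(c₁, c₂) is a bijection from C₂ onto {0, ..., r-1}. -/

import Mathlib

/-- Number of sign changes in a list of signs (`true` = `+`, `false` = `-`). -/
def signChanges (l : List Bool) : Nat :=
  (l.zip l.tail).countP (fun p => p.1 != p.2)

/-- The sequence of signs obtained from the set `A` by applying `χ` to `A` minus each of its
elements, deleted in increasing order. -/
def delSeq (chi : Finset Nat -> Bool) (A : Finset Nat) : List Bool :=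
  (List.range A.card).map (fun i => chi (((A.sort (fun a b => a <= b)).eraseIdx i).toFinset))

/-- `chi` is an `r`-signotope on ground set `S`: it is a sign map on `r`-subsets such that for
every `(r+1)`-subset `A ⊆ S` the sign sequence `delSeq chi A` has at most one sign change. -/
def IsSignotopeOn (r : Nat) (S : Finset Nat) (chi : Finset Nat -> Bool) : Prop :=
  forall A : Finset Nat, A ⊆ S -> A.card = r + 1 -> signChanges (delSeq chi A) <= 1

lemma card_four {c1 a b c : ℕ} (h1 : c1 < a) (h2 : a < b) (h3 : b < c) :
    ({c1, a, b, c} : Finset ℕ).card = 4 := by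
  rw [Finset.card_insert_of_notMem (by simp; omega),
      Finset.card_insert_of_notMem (by simp; omega),
      Finset.card_insert_of_notMem (by simp; omega),
      Finset.card_singleton]

lemma sort_four {c1 a b c : ℕ} (h1 : c1 < a) (h2 : a < b) (h3 : b < c) :
    ({c1, a, b, c} : Finset ℕ).sort (fun a b => a ≤ b) = [c1, a, b, c] := by
  rw [Finset.sort_insert (fun a b => a ≤ b) (fun x hx => by simp at hx; omega) (by simp; omega),
      Finset.sort_insert (fun a b => a ≤ b) (fun x hx => by simp at hx; omega) (by simp; omega),
      Finset.sort_insert (fun a b => a ≤ b) (fun x hx => by simp at hx; omega) (by simp; omega),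
      Finset.sort_singleton (fun a b => a ≤ b)]

lemma chain (n : ℕ) (chi : Finset Nat -> Bool) (hchi : IsSignotopeOn 3 (Finset.Icc 1 n) chi)
    {c1 a b c : ℕ} (hc1 : c1 ∈ Finset.Icc 1 n) (ha : a ∈ Finset.Icc 1 n)
    (hb : b ∈ Finset.Icc 1 n) (hc : c ∈ Finset.Icc 1 n)
    (h1 : c1 < a) (h2 : a < b) (h3 : b < c)
    (heq : chi {c1, a, b} = chi {c1, b, c}) : chi {c1, a, c} = chi {c1, a, b} := by
  have hsub : ({c1, a, b, c} : Finset ℕ) ⊆ Finset.Icc 1 n := by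
    intro x hx
    simp only [Finset.mem_insert, Finset.mem_singleton] at hx
    rcases hx with rfl | rfl | rfl | rfl <;> assumption
  have h4 := hchi {c1, a, b, c} hsub (card_four h1 h2 h3)
  rw [delSeq, card_four h1 h2 h3, sort_four h1 h2 h3] at h4
  simp only [List.range_succ, List.range_zero, List.nil_append, List.cons_append,
    List.map_cons, List.map_nil, List.eraseIdx, List.toFinset_cons, List.toFinset_nil,
    insert_empty_eq] at h4
  revert h4 heq
  generalize chi {a, b, c} = w
  generalize chi {c1, b, c} = x
  generalize chi {c1, a, c} = y
  generalize chi {c1, a, b} = z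
  revert w x y z
  decide


/-- for a 3-signotope on `[n]` with block partition `[n] = C₁ ∪ C₂` and any fixed
`c₁ ∈ C₁`, the second refined index component `c₂ ↦ (rf_χ (c₁, c₂))₂` is a bijection from `C₂`
onto `{0, ..., |C₂| - 1}`. -/
theorem second_refined_index_bijective (n : Nat) (chi : Finset Nat -> Bool)
    (hchi : IsSignotopeOn 3 (Finset.Icc 1 n) chi)
    (C1 C2 : Finset Nat) (hpart : C1 ∪ C2 = Finset.Icc 1 n)
    (hlt : ∀ c ∈ C1, ∀ c' ∈ C2, c < c')
    (c1 : Nat) (hc1 : c1 ∈ C1) :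
    Set.BijOn
      (fun c2 => (C2.filter (fun c => c2 < c ∧ chi {c1, c2, c} = true)).card +
        (C2.filter (fun c => c < c2 ∧ chi {c1, c, c2} = false)).card)
      (C2 : Set Nat) {k : Nat | k < C2.card} := by
  classical
  set f : ℕ → ℕ := fun c2 => (C2.filter (fun c => c2 < c ∧ chi {c1, c2, c} = true)).card +
        (C2.filter (fun c => c < c2 ∧ chi {c1, c, c2} = false)).card with hf
  have hC2sub : C2 ⊆ Finset.Icc 1 n := by
    rw [← hpart]; exact Finset.subset_union_right
  have hc1m : c1 ∈ Finset.Icc 1 n := by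
    rw [← hpart]; exact Finset.mem_union_left _ hc1
  have hclt : ∀ c ∈ C2, c1 < c := fun c hc => hlt c1 hc1 c hc
  -- the tournament relation
  set P : ℕ → ℕ → Prop := fun a b =>
    (a < b ∧ chi {c1, a, b} = true) ∨ (b < a ∧ chi {c1, b, a} = false) with hP
  have hirr : ∀ a, ¬ P a a := by intro a h; rcases h with ⟨h, _⟩ | ⟨h, _⟩ <;> omega
  have hasym : ∀ a b, a ≠ b → (P a b ↔ ¬ P b a) := by
    intro a b hne
    rcases lt_or_gt_of_ne hne with h | h
    · constructor
      · rintro (⟨-, hx⟩ | ⟨hlt', -⟩) (⟨hlt', -⟩ | ⟨-, hy⟩) <;> first | omega | simp_all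
      · intro hnp
        rcases hx : chi {c1, a, b} with _ | _
        · exact absurd (Or.inr ⟨h, hx⟩) hnp
        · exact Or.inl ⟨h, hx⟩
    · constructor
      · rintro (⟨hlt', -⟩ | ⟨-, hx⟩) (⟨-, hy⟩ | ⟨hlt', -⟩) <;> first | omega | simp_all
      · intro hnp
        rcases hx : chi {c1, b, a} with _ | _
        · exact Or.inr ⟨h, hx⟩
        · exact absurd (Or.inl ⟨h, hx⟩) hnp
  -- transitivity
  have htrans : ∀ a ∈ C2, ∀ b ∈ C2, ∀ c ∈ C2, a ≠ c → P a b → P b c → P a c := by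
    intro a ha b hb c hc hac hab hbc
    have hne1 : a ≠ b := by rintro rfl; exact hirr a hab
    have hne2 : b ≠ c := by rintro rfl; exact hirr b hbc
    have hma := hC2sub ha; have hmb := hC2sub hb; have hmc := hC2sub hc
    have ha1 := hclt a ha; have hb1 := hclt b hb; have hc1' := hclt c hc
    rcases lt_or_gt_of_ne hne1 with h1 | h1 <;> rcases lt_or_gt_of_ne hne2 with h2 | h2 <;>
      rcases lt_or_gt_of_ne hac with h3 | h3 <;> try omega
    -- a<b<c, goal a<c
    · have gab : chi {c1, a, b} = true := by
        rcases hab with ⟨-, h⟩ | ⟨h, -⟩; exact h; omega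
      have gbc : chi {c1, b, c} = true := by
        rcases hbc with ⟨-, h⟩ | ⟨h, -⟩; exact h; omega
      refine Or.inl ⟨h3, ?_⟩
      rw [chain n chi hchi hc1m hma hmb hmc ha1 h1 h2 (by rw [gab, gbc]), gab]
    -- a<b, c<b, a<c : order a<c<b, goal P a c left
    · have gab : chi {c1, a, b} = true := by
        rcases hab with ⟨-, h⟩ | ⟨h, -⟩; exact h; omega
      have gcb : chi {c1, c, b} = false := by
        rcases hbc with ⟨h, -⟩ | ⟨-, h⟩; omega; exact h
      refine Or.inl ⟨h3, ?_⟩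
      by_contra hx
      have hx' : chi {c1, a, c} = false := by
        rcases h : chi {c1, a, c}; rfl; exact absurd h hx
      have := chain n chi hchi hc1m hma hmc hmb ha1 h3 h2 (by rw [hx', gcb])
      rw [hx', gab] at this; simp at this
    -- a<b, c<b, c<a : order c<a<b, goal P a c right: chi{c1,c,a}=false
    · have gab : chi {c1, a, b} = true := by
        rcases hab with ⟨-, h⟩ | ⟨h, -⟩; exact h; omega
      have gcb : chi {c1, c, b} = false := by
        rcases hbc with ⟨h, -⟩ | ⟨-, h⟩; omega; exact h
      refine Or.inr ⟨h3, ?_⟩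
      by_contra hx
      have hx' : chi {c1, c, a} = true := by
        rcases h : chi {c1, c, a}; exact absurd h hx; rfl
      have := chain n chi hchi hc1m hmc hma hmb hc1' h3 h1 (by rw [hx', gab])
      rw [gcb, hx'] at this; simp at this
    -- b<a, b<c, a<c : order b<a<c, goal P a c left
    · have gba : chi {c1, b, a} = false := by
        rcases hab with ⟨h, -⟩ | ⟨-, h⟩; omega; exact h
      have gbc : chi {c1, b, c} = true := by
        rcases hbc with ⟨-, h⟩ | ⟨h, -⟩; exact h; omega
      refine Or.inl ⟨h3, ?_⟩
      by_contra hx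
      have hx' : chi {c1, a, c} = false := by
        rcases h : chi {c1, a, c}; rfl; exact absurd h hx
      have := chain n chi hchi hc1m hmb hma hmc hb1 h1 h3 (by rw [gba, hx'])
      rw [gbc, gba] at this; simp at this
    -- b<a, b<c, c<a : order b<c<a, goal chi{c1,c,a}=false
    · have gba : chi {c1, b, a} = false := by
        rcases hab with ⟨h, -⟩ | ⟨-, h⟩; omega; exact h
      have gbc : chi {c1, b, c} = true := by
        rcases hbc with ⟨-, h⟩ | ⟨h, -⟩; exact h; omega
      refine Or.inr ⟨h3, ?_⟩
      by_contra hx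
      have hx' : chi {c1, c, a} = true := by
        rcases h : chi {c1, c, a}; exact absurd h hx; rfl
      have := chain n chi hchi hc1m hmb hmc hma hb1 h2 h3 (by rw [gbc, hx'])
      rw [gba, gbc] at this; simp at this
    -- b<a, c<b : order c<b<a, goal chi{c1,c,a}=false
    · have gba : chi {c1, b, a} = false := by
        rcases hab with ⟨h, -⟩ | ⟨-, h⟩; omega; exact h
      have gcb : chi {c1, c, b} = false := by
        rcases hbc with ⟨h, -⟩ | ⟨-, h⟩; omega; exact h
      refine Or.inr ⟨h3, ?_⟩
      rw [chain n chi hchi hc1m hmc hmb hma hc1' h2 h1 (by rw [gcb, gba]), gcb]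
  -- f as card of filter of P
  have hkey : ∀ c2, (C2.filter (fun c => P c2 c)).card = f c2 := by
    intro c2
    have : C2.filter (fun c => P c2 c) =
        C2.filter (fun c => c2 < c ∧ chi {c1, c2, c} = true) ∪
        C2.filter (fun c => c < c2 ∧ chi {c1, c, c2} = false) := by
      rw [← Finset.filter_or]
    rw [this, Finset.card_union_of_disjoint, hf]
    rw [Finset.disjoint_left]
    intro x hx hy
    simp only [Finset.mem_filter] at hx hy
    omega
  have hPss : ∀ a ∈ C2, ∀ b ∈ C2, P a b → C2.filter (fun c => P b c) ⊂ C2.filter (fun c => P a c) := by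
    intro a ha b hb hab
    have hne : a ≠ b := by rintro rfl; exact hirr a hab
    refine Finset.ssubset_iff_of_subset ?_ |>.mpr ⟨b, ?_, ?_⟩
    · intro d hd
      simp only [Finset.mem_filter] at hd ⊢
      refine ⟨hd.1, ?_⟩
      rcases eq_or_ne a d with rfl | had
      · exact absurd hd.2 ((hasym a b hne).mp hab)
      · exact htrans a ha b hb d hd.1 had hab hd.2
    · simp only [Finset.mem_filter]; exact ⟨hb, hab⟩
    · simp only [Finset.mem_filter]; exact fun h => hirr b h.2
  -- injectivity
  have hinj : Set.InjOn f (C2 : Set ℕ) := by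
    intro a ha b hb hfe
    simp only [Finset.mem_coe] at ha hb
    by_contra hne
    rw [← hkey a, ← hkey b] at hfe
    rcases (em (P a b)) with h | h
    · exact absurd hfe (Nat.ne_of_gt (Finset.card_lt_card (hPss a ha b hb h)))
    · have : P b a := by
        by_contra h2; exact h ((hasym a b hne).mpr h2)
      exact absurd hfe (Nat.ne_of_lt (Finset.card_lt_card (hPss b hb a ha this)))
  have hmaps : Set.MapsTo f (C2 : Set ℕ) {k : ℕ | k < C2.card} := by
    intro c2 hc2
    simp only [Finset.mem_coe] at hc2
    simp only [Set.mem_setOf_eq]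
    rw [← hkey c2]
    calc (C2.filter (fun c => P c2 c)).card ≤ (C2.erase c2).card := by
          apply Finset.card_le_card
          intro d hd
          simp only [Finset.mem_filter] at hd
          exact Finset.mem_erase.mpr ⟨fun h => hirr c2 (h ▸ hd.2), hd.1⟩
      _ < C2.card := Finset.card_erase_lt_of_mem hc2
  refine ⟨hmaps, hinj, ?_⟩
  -- surjectivity
  have himg : Finset.image f C2 = Finset.range C2.card := by
    apply Finset.eq_of_subset_of_card_le
    · intro k hk
      simp only [Finset.mem_image] at hk
      obtain ⟨c2, hc2, rfl⟩ := hk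
      exact Finset.mem_range.mpr (hmaps hc2)
    · rw [Finset.card_range, Finset.card_image_of_injOn hinj]
  intro k hk
  have : k ∈ Finset.image f C2 := by
    rw [himg]; exact Finset.mem_range.mpr hk
  simp only [Finset.mem_image] at this
  obtain ⟨c2, hc2, rfl⟩ := this
  exact ⟨c2, hc2, rfl⟩
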